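/- Let d ≥ 1. Let c : ℝ^d → ℝ be twice continuously differentiable with ‖D²c(x)‖ ≤ M (operator norm of the second derivative) for all x, let G : ℝ^d → ℝ be measurable with A := ∫_{ℝ^d} |z|²·|G(z)| dz < ∞, and let h ∈ L²(ℝ^d). Then the function F(x) := ∫_{ℝ^d} G(x−y)·(c(y) − c(x) − ∇c(x)·(y−x))·h(y) dy is well defined for almost every x, belongs to L²(ℝ^d), and satisfies ‖F‖_{L²} ≤ (M·A/2)·‖h‖_{L²}. -/

import Mathlib

open MeasureTheory
open scoped ENNReal

lemma taylor2_bound {E : Type*} [NormedAddCommGroup E] [NormedSpace ℝ E]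
    (c : E → ℝ) (M : ℝ) (hc : ContDiff ℝ 2 c)
    (hc2 : ∀ x, ‖fderiv ℝ (fderiv ℝ c) x‖ ≤ M) (x y : E) :
    |c y - c x - fderiv ℝ c x (y - x)| ≤ M / 2 * ‖y - x‖ ^ 2 := by
  have hdf : Differentiable ℝ (fderiv ℝ c) :=
    (hc.fderiv_right (m := 1) (by norm_num)).differentiable one_ne_zero
  have hlip : ∀ a b : E, ‖fderiv ℝ c a - fderiv ℝ c b‖ ≤ M * ‖a - b‖ := by
    intro a b
    exact Convex.norm_image_sub_le_of_norm_fderiv_le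
      (fun z _ => hdf z) (fun z _ => hc2 z) convex_univ
      (Set.mem_univ b) (Set.mem_univ a)
  set v := y - x with hv
  set g' : ℝ → ℝ := fun t => fderiv ℝ c (x + t • v) v with hg'def
  have hderiv : ∀ t : ℝ, HasDerivAt (fun t : ℝ => c (x + t • v)) (g' t) t := by
    intro t
    have h1 : HasDerivAt (fun t : ℝ => x + t • v) v t := by
      simpa using ((hasDerivAt_id t).smul_const v).const_add x
    exact ((hc.differentiable (by simp)) (x + t • v)).hasFDerivAt.comp_hasDerivAt t h1
  have hcont : Continuous g' := by
    exact ((hc.continuous_fderiv (by simp)).comp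
      (continuous_const.add (continuous_id.smul continuous_const))).clm_apply continuous_const
  have hint : IntervalIntegrable g' volume 0 1 := hcont.intervalIntegrable 0 1
  have key : ∫ t in (0:ℝ)..1, g' t = c y - c x := by
    rw [intervalIntegral.integral_eq_sub_of_hasDerivAt (fun t _ => hderiv t) hint]
    simp [hv]
  have hrem : c y - c x - fderiv ℝ c x v = ∫ t in (0:ℝ)..1, (g' t - g' 0) := by
    rw [intervalIntegral.integral_sub hint intervalIntegrable_const, key,
      intervalIntegral.integral_const]
    simp [hg'def]
  have hbound : ∀ t ∈ Set.Icc (0:ℝ) 1, |g' t - g' 0| ≤ M * ‖v‖ ^ 2 * t := by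
    intro t ht
    have h1 : |g' t - g' 0| ≤ ‖fderiv ℝ c (x + t • v) - fderiv ℝ c (x + (0:ℝ) • v)‖ * ‖v‖ := by
      have := (fderiv ℝ c (x + t • v) - fderiv ℝ c (x + (0:ℝ) • v)).le_opNorm v
      simpa [hg'def] using this
    have h2 : ‖fderiv ℝ c (x + t • v) - fderiv ℝ c (x + (0:ℝ) • v)‖ ≤ M * (t * ‖v‖) := by
      have := hlip (x + t • v) (x + (0:ℝ) • v)
      calc ‖fderiv ℝ c (x + t • v) - fderiv ℝ c (x + (0:ℝ) • v)‖
          ≤ M * ‖(x + t • v) - (x + (0:ℝ) • v)‖ := this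
        _ = M * (t * ‖v‖) := by
            rw [show (x + t • v) - (x + (0:ℝ) • v) = t • v by module]
            rw [norm_smul, Real.norm_eq_abs, abs_of_nonneg ht.1]
    calc |g' t - g' 0| ≤ M * (t * ‖v‖) * ‖v‖ :=
          h1.trans (mul_le_mul_of_nonneg_right h2 (norm_nonneg v))
      _ = M * ‖v‖ ^ 2 * t := by ring
  have hbint : IntervalIntegrable (fun t : ℝ => M * ‖v‖ ^ 2 * t) volume 0 1 :=
    (continuous_const.mul continuous_id).intervalIntegrable 0 1
  have habs : |∫ t in (0:ℝ)..1, (g' t - g' 0)| ≤ |∫ t in (0:ℝ)..1, M * ‖v‖ ^ 2 * t| := by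
    rw [← Real.norm_eq_abs (∫ t in (0:ℝ)..1, (g' t - g' 0))]
    refine (intervalIntegral.norm_integral_le_of_norm_le zero_le_one ?_ hbint).trans (le_abs_self _)
    filter_upwards with t ht
    exact (Real.norm_eq_abs _) ▸ hbound t ⟨le_of_lt (by simpa using ht.1), by simpa using ht.2⟩
  have hval : ∫ t in (0:ℝ)..1, M * ‖v‖ ^ 2 * t = M / 2 * ‖v‖ ^ 2 := by
    rw [intervalIntegral.integral_const_mul, integral_id]
    ring
  have hMnn : 0 ≤ M := le_trans (norm_nonneg (fderiv ℝ (fderiv ℝ c) x)) (hc2 x)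
  rw [hrem]
  calc |∫ t in (0:ℝ)..1, (g' t - g' 0)| ≤ |∫ t in (0:ℝ)..1, M * ‖v‖ ^ 2 * t| := habs
    _ = M / 2 * ‖v‖ ^ 2 := by rw [hval]; exact abs_of_nonneg (by positivity)


/-- Second-order (Taylor remainder) commutator estimate: if `c` is `C²` with
`‖D²c‖ ≤ M`, `A = ∫ |z|²·|G(z)| dz < ∞` and `h ∈ L²`, then
`F(x) = ∫ G(x−y)(c(y)−c(x)−∇c(x)·(y−x))h(y) dy` belongs to `L²` with
`‖F‖_{L²} ≤ (M·A/2)·‖h‖_{L²}`. -/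
theorem commutator_second_order_L2 (d : ℕ) (hd : 1 ≤ d)
    (c : EuclideanSpace ℝ (Fin d) → ℝ) (M : ℝ) (hM : 0 ≤ M)
    (hc : ContDiff ℝ 2 c)
    (hc2 : ∀ x, ‖fderiv ℝ (fderiv ℝ c) x‖ ≤ M)
    (G : EuclideanSpace ℝ (Fin d) → ℝ) (hGm : Measurable G)
    (hGA : Integrable (fun z => ‖z‖ ^ 2 * |G z|))
    (h : EuclideanSpace ℝ (Fin d) → ℝ) (hh : MemLp h 2 volume) :
    MemLp (fun x => ∫ y, G (x - y) * (c y - c x - fderiv ℝ c x (y - x)) * h y) 2 volume ∧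
    eLpNorm (fun x => ∫ y, G (x - y) * (c y - c x - fderiv ℝ c x (y - x)) * h y) 2 volume
      ≤ ENNReal.ofReal (M * (∫ z, ‖z‖ ^ 2 * |G z|) / 2) * eLpNorm h 2 volume := by
  obtain ⟨h', hh'm, hhh⟩ := hh.1
  have hr2 : ∀ a : ℝ≥0∞, a ^ (2:ℝ) = a * a := fun a => by
    rw [show (2:ℝ) = ((2:ℕ):ℝ) by norm_num, ENNReal.rpow_natCast]; ring
  set k : EuclideanSpace ℝ (Fin d) → ℝ≥0∞ :=
    fun z => ENNReal.ofReal (M / 2 * (‖z‖ ^ 2 * |G z|)) with hkdef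
  have hkm : Measurable k :=
    (((measurable_norm.pow_const 2).mul hGm.abs).const_mul (M/2)).ennreal_ofReal
  set I := ENNReal.ofReal (M * (∫ z, ‖z‖ ^ 2 * |G z|) / 2) with hIdef
  have hIk : ∫⁻ z, k z = I := by
    rw [hkdef, hIdef,
      ← ofReal_integral_eq_lintegral_ofReal (hGA.const_mul (M/2))
        (ae_of_all _ fun z => by positivity), integral_const_mul]
    congr 1; ring
  set H : EuclideanSpace ℝ (Fin d) → ℝ≥0∞ := fun y => ‖h' y‖ₑ with hHdef
  have hHm : Measurable H := hh'm.measurable.enorm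
  -- pointwise kernel bound
  have hk_bound : ∀ x y, ‖G (x - y) * (c y - c x - fderiv ℝ c x (y - x)) * h' y‖ₑ
      ≤ k (x - y) * H y := by
    intro x y
    show ‖G (x - y) * (c y - c x - fderiv ℝ c x (y - x)) * h' y‖ₑ
      ≤ ENNReal.ofReal (M / 2 * (‖x - y‖ ^ 2 * |G (x - y)|)) * ‖h' y‖ₑ
    rw [← ofReal_norm, ← ofReal_norm,
      ← ENNReal.ofReal_mul (by positivity)]
    apply ENNReal.ofReal_le_ofReal
    rw [Real.norm_eq_abs, abs_mul, abs_mul, Real.norm_eq_abs]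
    have hT := taylor2_bound c M hc hc2 x y
    have h1 : |G (x - y)| * |c y - c x - fderiv ℝ c x (y - x)|
        ≤ M / 2 * (‖x - y‖ ^ 2 * |G (x - y)|) := by
      calc |G (x - y)| * |c y - c x - fderiv ℝ c x (y - x)|
          ≤ |G (x - y)| * (M / 2 * ‖y - x‖ ^ 2) :=
            mul_le_mul_of_nonneg_left hT (abs_nonneg _)
        _ = M / 2 * (‖x - y‖ ^ 2 * |G (x - y)|) := by rw [norm_sub_rev]; ring
    exact mul_le_mul_of_nonneg_right h1 (abs_nonneg _)
  -- the integrals with h and with its measurable representative h' agree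
  have hFeq : ∀ x, (∫ y, G (x - y) * (c y - c x - fderiv ℝ c x (y - x)) * h y)
      = ∫ y, G (x - y) * (c y - c x - fderiv ℝ c x (y - x)) * h' y := fun x =>
    integral_congr_ae (hhh.mono fun y hy => by simp only [hy])
  -- measurability
  have hΦm : Measurable (fun p : EuclideanSpace ℝ (Fin d) × EuclideanSpace ℝ (Fin d) =>
      G (p.1 - p.2) * (c p.2 - c p.1 - fderiv ℝ c p.1 (p.2 - p.1)) * h' p.2) := by
    have h1 : Measurable fun p : EuclideanSpace ℝ (Fin d) × EuclideanSpace ℝ (Fin d) =>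
        G (p.1 - p.2) := hGm.comp (measurable_fst.sub measurable_snd)
    have h2 : Continuous fun p : EuclideanSpace ℝ (Fin d) × EuclideanSpace ℝ (Fin d) =>
        c p.2 - c p.1 - fderiv ℝ c p.1 (p.2 - p.1) := by
      have hcc := hc.continuous
      have hfd := hc.continuous_fderiv (by simp)
      exact ((hcc.comp continuous_snd).sub (hcc.comp continuous_fst)).sub
        ((hfd.comp continuous_fst).clm_apply (continuous_snd.sub continuous_fst))
    exact (h1.mul h2.measurable).mul (hh'm.measurable.comp measurable_snd)
  have hFm : AEStronglyMeasurable
      (fun x => ∫ y, G (x - y) * (c y - c x - fderiv ℝ c x (y - x)) * h y) volume := by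
    have hSM : StronglyMeasurable (fun x : EuclideanSpace ℝ (Fin d) =>
        ∫ y, G (x - y) * (c y - c x - fderiv ℝ c x (y - x)) * h' y) :=
      hΦm.stronglyMeasurable.integral_prod_right'
    exact hSM.aestronglyMeasurable.congr (ae_of_all _ fun x => (hFeq x).symm)
  -- pointwise bound for the integral
  set S : EuclideanSpace ℝ (Fin d) → ℝ≥0∞ := fun x => ∫⁻ y, k (x - y) * H y with hSdef
  have hstep1 : ∀ x, ‖∫ y, G (x - y) * (c y - c x - fderiv ℝ c x (y - x)) * h y‖ₑ
      ≤ S x := by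
    intro x
    rw [hFeq x]
    exact (enorm_integral_le_lintegral_enorm _).trans
      (lintegral_mono fun y => hk_bound x y)
  -- translation invariance facts
  have htrans1 : ∀ x, ∫⁻ y, k (x - y) = I := by
    intro x
    rw [← hIk]
    exact (Measure.measurePreserving_sub_left volume x).lintegral_comp hkm
  have htrans2 : ∀ y, ∫⁻ x, k (x - y) = I := fun y => by
    rw [← hIk]; exact lintegral_sub_right_eq_self k y
  -- Cauchy–Schwarz (Schur test step)
  have hCS2 : ∀ x, S x ^ (2:ℝ) ≤ I * ∫⁻ y, k (x - y) * H y ^ (2:ℝ) := by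
    intro x
    have hkx : Measurable fun y : EuclideanSpace ℝ (Fin d) => k (x - y) :=
      hkm.comp (measurable_const.sub measurable_id)
    have hcs := ENNReal.lintegral_mul_le_Lp_mul_Lq volume
      (Real.holderConjugate_iff.mpr ⟨one_lt_two, by norm_num⟩ : Real.HolderConjugate 2 2)
      (f := fun y => k (x - y) ^ (1/2:ℝ))
      (g := fun y => k (x - y) ^ (1/2:ℝ) * H y)
      (hkx.pow_const _).aemeasurable ((hkx.pow_const _).mul hHm).aemeasurable
    have hfg : (fun y => (k (x - y) ^ (1/2:ℝ)) * (k (x - y) ^ (1/2:ℝ) * H y))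
        = fun y => k (x - y) * H y := by
      funext y
      rw [← mul_assoc, ← ENNReal.rpow_add_of_nonneg _ _ (by norm_num) (by norm_num)]
      norm_num
    have hf2 : ∀ y, (k (x - y) ^ (1/2:ℝ)) ^ (2:ℝ) = k (x - y) := fun y => by
      rw [← ENNReal.rpow_mul]; norm_num
    have hg2 : ∀ y, (k (x - y) ^ (1/2:ℝ) * H y) ^ (2:ℝ) = k (x - y) * H y ^ (2:ℝ) := fun y => by
      rw [ENNReal.mul_rpow_of_nonneg _ _ (by norm_num), ← ENNReal.rpow_mul]; norm_num
    have hS_le : S x ≤ I ^ (1/2:ℝ) * (∫⁻ y, k (x - y) * H y ^ (2:ℝ)) ^ (1/2:ℝ) := by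
      rw [hSdef]
      simp only [Pi.mul_apply] at hcs
      calc (∫⁻ y, k (x - y) * H y)
          = ∫⁻ y, (k (x - y) ^ (1/2:ℝ)) * (k (x - y) ^ (1/2:ℝ) * H y) := by
            rw [show (fun y => k (x - y) * H y) = _ from hfg.symm]
        _ ≤ (∫⁻ y, (k (x - y) ^ (1/2:ℝ)) ^ (2:ℝ)) ^ (1/2:ℝ)
            * (∫⁻ y, (k (x - y) ^ (1/2:ℝ) * H y) ^ (2:ℝ)) ^ (1/2:ℝ) := hcs
        _ = I ^ (1/2:ℝ) * (∫⁻ y, k (x - y) * H y ^ (2:ℝ)) ^ (1/2:ℝ) := by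
            simp_rw [hf2, hg2, htrans1 x]
    calc S x ^ (2:ℝ)
        ≤ (I ^ (1/2:ℝ) * (∫⁻ y, k (x - y) * H y ^ (2:ℝ)) ^ (1/2:ℝ)) ^ (2:ℝ) :=
          ENNReal.rpow_le_rpow hS_le (by norm_num)
      _ = I * ∫⁻ y, k (x - y) * H y ^ (2:ℝ) := by
          rw [ENNReal.mul_rpow_of_nonneg _ _ (by norm_num), ← ENNReal.rpow_mul,
            ← ENNReal.rpow_mul]
          norm_num
  -- integrate and swap
  have hswap : ∫⁻ x, ∫⁻ y, k (x - y) * H y ^ (2:ℝ) = I * ∫⁻ y, H y ^ (2:ℝ) := by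
    have hH2m : Measurable fun y => H y ^ (2:ℝ) := by
      simp_rw [hr2]; exact hHm.mul hHm
    rw [lintegral_lintegral_swap
      (((hkm.comp (measurable_fst.sub measurable_snd)).mul
        (hH2m.comp measurable_snd)).aemeasurable)]
    calc ∫⁻ y, ∫⁻ x, k (x - y) * H y ^ (2:ℝ)
        = ∫⁻ y, I * H y ^ (2:ℝ) := by
          refine lintegral_congr fun y => ?_
          have hky : Measurable fun x : EuclideanSpace ℝ (Fin d) => k (x - y) :=
            hkm.comp (measurable_sub_const y)
          rw [lintegral_mul_const _ hky, htrans2 y]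
      _ = I * ∫⁻ y, H y ^ (2:ℝ) := lintegral_const_mul _ hH2m
  -- the L² norm of h
  have hhnorm : eLpNorm h 2 volume = (∫⁻ y, H y ^ (2:ℝ)) ^ (1/2:ℝ) := by
    rw [eLpNorm_congr_ae hhh, eLpNorm_eq_lintegral_rpow_enorm_toReal two_ne_zero ENNReal.ofNat_ne_top]
    norm_num
    rfl
  -- main estimate
  have hmain : eLpNorm (fun x => ∫ y, G (x - y) * (c y - c x - fderiv ℝ c x (y - x)) * h y)
      2 volume ≤ I * eLpNorm h 2 volume := by
    rw [eLpNorm_eq_lintegral_rpow_enorm_toReal two_ne_zero ENNReal.ofNat_ne_top]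
    simp only [ENNReal.toReal_ofNat, one_div]
    calc (∫⁻ x, ‖∫ y, G (x - y) * (c y - c x - fderiv ℝ c x (y - x)) * h y‖ₑ ^ (2:ℝ))
          ^ ((2:ℝ))⁻¹
        ≤ (∫⁻ x, S x ^ (2:ℝ)) ^ ((2:ℝ))⁻¹ := by
          refine ENNReal.rpow_le_rpow (lintegral_mono fun x => ?_) (by norm_num)
          exact ENNReal.rpow_le_rpow (hstep1 x) (by norm_num)
      _ ≤ (I * (I * ∫⁻ y, H y ^ (2:ℝ))) ^ ((2:ℝ))⁻¹ := by
          refine ENNReal.rpow_le_rpow ?_ (by norm_num)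
          calc (∫⁻ x, S x ^ (2:ℝ)) ≤ ∫⁻ x, I * ∫⁻ y, k (x - y) * H y ^ (2:ℝ) :=
                lintegral_mono hCS2
            _ = I * ∫⁻ x, ∫⁻ y, k (x - y) * H y ^ (2:ℝ) := by
                refine lintegral_const_mul' _ _ (by rw [hIdef]; exact ENNReal.ofReal_ne_top)
            _ = I * (I * ∫⁻ y, H y ^ (2:ℝ)) := by rw [hswap]
      _ = I * eLpNorm h 2 volume := by
          rw [hhnorm, ← mul_assoc, ENNReal.mul_rpow_of_nonneg _ _ (by norm_num)]
          congr 1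
          · rw [← hr2, ← ENNReal.rpow_mul]; norm_num
          · norm_num
  refine ⟨⟨hFm, ?_⟩, hmain⟩
  calc eLpNorm _ 2 volume ≤ I * eLpNorm h 2 volume := hmain
    _ < ⊤ := ENNReal.mul_lt_top (by rw [hIdef]; exact ENNReal.ofReal_lt_top) hh.2
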